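/- The wrapped normal density f_WN(·; μ, v∞) is a stationary density for the WOU conditional density: for every θ ∈ ℝ and every t > 0, ∫_{−π}^{π} f_WN(θ_s; μ, v∞)·p_t(θ | θ_s) dθ_s = f_WN(θ; μ, v∞). -/

import Mathlib

open MeasureTheory Real Set
open scoped ENNReal

/-- Centered Gaussian density with variance `v` on `ℝ`. -/
noncomputable def gaussDens (v x : ℝ) : ℝ :=
  (Real.sqrt (2 * Real.pi * v))⁻¹ * Real.exp (-(x ^ 2) / (2 * v))

lemma gaussDens_eq_pdf {v : ℝ} (hv : 0 < v) :
    gaussDens v = ProbabilityTheory.gaussianPDFReal 0 ⟨v, hv.le⟩ := by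
  funext x
  simp [gaussDens, ProbabilityTheory.gaussianPDFReal]; rfl

lemma gaussDens_pos {v : ℝ} (hv : 0 < v) (x : ℝ) : 0 < gaussDens v x := by
  rw [gaussDens_eq_pdf hv]
  exact ProbabilityTheory.gaussianPDFReal_pos _ _ _ (by intro h; exact hv.ne' (congrArg NNReal.toReal h))

lemma measurable_gaussDens (v : ℝ) : Measurable (gaussDens v) :=
  (((measurable_id.pow_const 2).neg.div_const _).exp.const_mul _)

lemma integrable_gaussDens_sub {v : ℝ} (hv : 0 < v) (a : ℝ) :
    Integrable (fun x => gaussDens v (x - a)) := by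
  rw [gaussDens_eq_pdf hv]
  exact (ProbabilityTheory.integrable_gaussianPDFReal 0 _).comp_sub_right a

lemma integral_gaussDens_sub {v : ℝ} (hv : 0 < v) (a : ℝ) :
    (∫ x, gaussDens v (x - a)) = 1 := by
  rw [gaussDens_eq_pdf hv]
  rw [show (fun x => ProbabilityTheory.gaussianPDFReal 0 (⟨v, hv.le⟩ : NNReal) (x - a))
      = ProbabilityTheory.gaussianPDFReal (0 + a) ⟨v, hv.le⟩ by
    funext x; exact ProbabilityTheory.gaussianPDFReal_sub x a]
  exact ProbabilityTheory.integral_gaussianPDFReal_eq_one _ (by intro h; exact hv.ne' (congrArg NNReal.toReal h))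

lemma summable_gaussDens {v : ℝ} (hv : 0 < v) (x : ℝ) :
    Summable fun k : ℤ => gaussDens v (x + 2 * (k : ℝ) * π) := by
  unfold gaussDens
  apply Summable.mul_left
  have h := HurwitzKernelBounds.summable_f_int 0 (x / (2 * π))
    (show (0:ℝ) < 2 * π / v by positivity)
  refine h.congr fun k => ?_
  rw [HurwitzKernelBounds.f_int, pow_zero, one_mul]
  congr 1
  have hπ : (π : ℝ) ≠ 0 := Real.pi_ne_zero
  field_simp
  ring

/-- Wrapped normal density `f_WN(θ; μ, v)`. -/
noncomputable def fWN (μ v θ : ℝ) : ℝ :=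
  ∑' k : ℤ, gaussDens v (θ - μ + 2 * (k : ℝ) * Real.pi)

lemma fWN_pos {v : ℝ} (hv : 0 < v) (μ θ : ℝ) : 0 < fWN μ v θ :=
  Summable.tsum_pos (summable_gaussDens hv (θ - μ)) (fun k => (gaussDens_pos hv _).le) 0
    (gaussDens_pos hv _)

lemma fWN_nonneg {v : ℝ} (hv : 0 < v) (μ θ : ℝ) : 0 ≤ fWN μ v θ :=
  (fWN_pos hv μ θ).le

/-- The key Gaussian symmetry identity. -/
lemma gauss_swap {v γ r : ℝ} (hv : 0 < v) (hγ : 0 < γ) (hgr : γ = v * (1 - r ^ 2))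
    (c x : ℝ) :
    gaussDens v x * gaussDens γ (c - r * x) = gaussDens v c * gaussDens γ (x - r * c) := by
  have h1 : (0:ℝ) < 1 - r ^ 2 := by
    rcases hgr with rfl
    nlinarith [mul_pos hv (show (0:ℝ) < 1 - r^2 from by nlinarith [hγ])]
  have key : -(x ^ 2) / (2 * v) + -((c - r * x) ^ 2) / (2 * γ)
      = -(c ^ 2) / (2 * v) + -((x - r * c) ^ 2) / (2 * γ) := by
    rcases hgr with rfl
    field_simp
    ring
  simp only [gaussDens]
  rw [mul_mul_mul_comm, ← Real.exp_add, mul_mul_mul_comm, ← Real.exp_add, key]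

/-- Winding-number weights `w_k(θ)` with stationary variance `v∞ = σ²/(2α)`. -/
noncomputable def wnWeight (α μ σ : ℝ) (k : ℤ) (θ : ℝ) : ℝ :=
  gaussDens (σ ^ 2 / (2 * α)) (θ - μ + 2 * (k : ℝ) * Real.pi) / fWN μ (σ ^ 2 / (2 * α)) θ

/-- Conditional mean `μ_t^m(θ_s) = μ + e^{−αt}(θ_s − μ + 2mπ)`. -/
noncomputable def wouMean (α μ : ℝ) (t : ℝ) (m : ℤ) (θs : ℝ) : ℝ :=
  μ + Real.exp (-(α * t)) * (θs - μ + 2 * (m : ℝ) * Real.pi)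

/-- Conditional variance `γ_t = σ²(1 − e^{−2αt})/(2α)`. -/
noncomputable def wouVar (α σ t : ℝ) : ℝ :=
  σ ^ 2 * (1 - Real.exp (-(2 * α * t))) / (2 * α)

/-- The WOU conditional density `p_t(θ | θ_s)`. -/
noncomputable def pWOU (α μ σ t θ θs : ℝ) : ℝ :=
  ∑' m : ℤ, wnWeight α μ σ m θs * fWN (wouMean α μ t m θs) (wouVar α σ t) θ

/-- Auxiliary double-indexed summand. -/
noncomputable def auxA (v γ r μ θ : ℝ) (m k : ℤ) (θs : ℝ) : ℝ :=
  gaussDens v (θs - μ + 2 * (m : ℝ) * Real.pi) *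
    gaussDens γ ((θ - μ + 2 * (k : ℝ) * Real.pi) - r * (θs - μ + 2 * (m : ℝ) * Real.pi))

noncomputable def auxE (v γ r μ θ : ℝ) (θs : ℝ) : ℝ≥0∞ :=
  ∑' m : ℤ, ∑' k : ℤ, ENNReal.ofReal (auxA v γ r μ θ m k θs)

lemma auxA_nonneg {v γ : ℝ} (hv : 0 < v) (hγ : 0 < γ) (r μ θ : ℝ) (m k : ℤ) (θs : ℝ) :
    0 ≤ auxA v γ r μ θ m k θs :=
  mul_nonneg (gaussDens_pos hv _).le (gaussDens_pos hγ _).le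

lemma measurable_auxA (v γ r μ θ : ℝ) (m k : ℤ) : Measurable (auxA v γ r μ θ m k) := by
  apply Measurable.mul
  · exact (measurable_gaussDens v).comp ((measurable_id.sub_const μ).add_const _)
  · exact (measurable_gaussDens γ).comp
      (measurable_const.sub (((measurable_id.sub_const μ).add_const _).const_mul r))

lemma measurable_auxE (v γ r μ θ : ℝ) : Measurable (auxE v γ r μ θ) :=
  Measurable.ennreal_tsum fun m => Measurable.ennreal_tsum fun k =>
    (measurable_auxA v γ r μ θ m k).ennreal_ofReal

/-- Translation step: integrating the `(m,k)` summand over `(-π,π]` equals integrating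
the `m = 0`-style summand over the `m`-th tile. -/
lemma auxA_lintegral_Ioc {v γ r μ θ : ℝ} (m k : ℤ) :
    (∫⁻ θs in Ioc (-π) π, ENNReal.ofReal (auxA v γ r μ θ m k θs)) =
    ∫⁻ x in Ioc ((-π - μ) + m • (2*π)) ((-π - μ) + (m+1) • (2*π)),
      ENNReal.ofReal (gaussDens v x *
        gaussDens γ ((θ - μ + 2 * (k : ℝ) * π) - r * x)) := by
  set d : ℝ := 2 * (m : ℝ) * π - μ with hd_def
  have mp : MeasurePreserving (fun x : ℝ => x + d) volume volume :=
    measurePreserving_add_right volume d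
  have emb : MeasurableEmbedding (fun x : ℝ => x + d) :=
    (MeasurableEquiv.addRight d).measurableEmbedding
  have h := mp.setLIntegral_comp_preimage_emb emb
    (fun x => ENNReal.ofReal (gaussDens v x *
      gaussDens γ ((θ - μ + 2 * (k : ℝ) * π) - r * x)))
    (Ioc ((-π - μ) + m • (2*π)) ((-π - μ) + (m+1) • (2*π)))
  rw [Set.preimage_add_const_Ioc] at h
  rw [← h]
  have hs : Ioc ((-π - μ) + m • (2*π) - d) ((-π - μ) + (m+1) • (2*π) - d) = Ioc (-π) π := by
    congr 1 <;> · push_cast [zsmul_eq_mul, hd_def]; ring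
  rw [hs]
  refine setLIntegral_congr_fun measurableSet_Ioc (fun θs _ => ?_)
  have e1 : θs + d = θs - μ + 2 * (m : ℝ) * π := by rw [hd_def]; ring
  simp only [e1, auxA]

/-- The lintegral of `auxE` over `(-π,π]`. -/
lemma auxE_lintegral {v γ r : ℝ} (hv : 0 < v) (hγ : 0 < γ) (hγ_eq : γ = v * (1 - r ^ 2))
    (μ θ : ℝ) :
    (∫⁻ θs in Ioc (-π) π, auxE v γ r μ θ θs) = ENNReal.ofReal (fWN μ v θ) := by
  have hnn : ∀ (k : ℤ) (x : ℝ), 0 ≤ gaussDens v x *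
      gaussDens γ ((θ - μ + 2 * (k : ℝ) * π) - r * x) :=
    fun k x => mul_nonneg (gaussDens_pos hv _).le (gaussDens_pos hγ _).le
  have hswap : ∀ (k : ℤ) (x : ℝ),
      gaussDens v x * gaussDens γ ((θ - μ + 2 * (k : ℝ) * π) - r * x) =
      gaussDens v (θ - μ + 2 * (k : ℝ) * π) *
        gaussDens γ (x - r * (θ - μ + 2 * (k : ℝ) * π)) :=
    fun k x => gauss_swap hv hγ hγ_eq _ x
  have tile : ∀ k : ℤ,
      (∑' m : ℤ, ∫⁻ θs in Ioc (-π) π, ENNReal.ofReal (auxA v γ r μ θ m k θs)) =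
      ∫⁻ x, ENNReal.ofReal (gaussDens v x *
        gaussDens γ ((θ - μ + 2 * (k : ℝ) * π) - r * x)) := by
    intro k
    have := fun m : ℤ => auxA_lintegral_Ioc (v := v) (γ := γ) (r := r) (μ := μ) (θ := θ) m k
    simp_rw [this]
    rw [← lintegral_iUnion (fun m => measurableSet_Ioc)
      (pairwise_disjoint_Ioc_add_zsmul (-π - μ) (2*π)),
      iUnion_Ioc_add_zsmul (by positivity : (0:ℝ) < 2*π), Measure.restrict_univ]
  have hint : ∀ k : ℤ, Integrable (fun x => gaussDens v x *
      gaussDens γ ((θ - μ + 2 * (k : ℝ) * π) - r * x)) := by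
    intro k
    simp_rw [hswap k]
    exact (integrable_gaussDens_sub hγ _).const_mul _
  have hval : ∀ k : ℤ, (∫ x, gaussDens v x *
      gaussDens γ ((θ - μ + 2 * (k : ℝ) * π) - r * x)) =
      gaussDens v (θ - μ + 2 * (k : ℝ) * π) := by
    intro k
    simp_rw [hswap k]
    rw [integral_const_mul, integral_gaussDens_sub hγ, mul_one]
  unfold auxE
  rw [lintegral_tsum fun m => (Measurable.ennreal_tsum fun k =>
    (measurable_auxA v γ r μ θ m k).ennreal_ofReal).aemeasurable]
  have h2 : ∀ m : ℤ, (∫⁻ θs in Ioc (-π) π, ∑' k : ℤ, ENNReal.ofReal (auxA v γ r μ θ m k θs)) =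
      ∑' k : ℤ, ∫⁻ θs in Ioc (-π) π, ENNReal.ofReal (auxA v γ r μ θ m k θs) := fun m =>
    lintegral_tsum fun k => (measurable_auxA v γ r μ θ m k).ennreal_ofReal.aemeasurable
  simp_rw [h2]
  rw [ENNReal.tsum_comm]
  have h3 : ∀ k : ℤ, (∑' m : ℤ, ∫⁻ θs in Ioc (-π) π, ENNReal.ofReal (auxA v γ r μ θ m k θs)) =
      ENNReal.ofReal (gaussDens v (θ - μ + 2 * (k : ℝ) * π)) := by
    intro k
    rw [tile k, ← ofReal_integral_eq_lintegral_ofReal (hint k) (ae_of_all _ (hnn k)), hval k]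
  simp_rw [h3]
  rw [← ENNReal.ofReal_tsum_of_nonneg (fun k => (gaussDens_pos hv _).le)
    (summable_gaussDens hv (θ - μ))]
  rfl


/-- The wrapped normal density `f_WN(·; μ, σ²/(2α))` is stationary for the WOU
conditional density. -/
theorem pWOU_stationary (α μ σ : ℝ) (hα : 0 < α) (hσ : 0 < σ)
    (θ : ℝ) (t : ℝ) (ht : 0 < t) :
    (∫ θs in (-Real.pi)..Real.pi, fWN μ (σ ^ 2 / (2 * α)) θs * pWOU α μ σ t θ θs) =
      fWN μ (σ ^ 2 / (2 * α)) θ := by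
  have hπ : (0:ℝ) < π := Real.pi_pos
  set v : ℝ := σ ^ 2 / (2 * α) with hv_def
  have hv : 0 < v := by positivity
  set r : ℝ := Real.exp (-(α * t)) with hr_def
  have hr0 : 0 < r := Real.exp_pos _
  have hr1 : r < 1 := by
    rw [hr_def]; exact Real.exp_lt_one_iff.mpr (by nlinarith)
  set γ : ℝ := wouVar α σ t with hγ_def
  have hr2 : r ^ 2 = Real.exp (-(2 * α * t)) := by
    rw [hr_def, sq, ← Real.exp_add]; congr 1; ring
  have hγ_eq : γ = v * (1 - r ^ 2) := by
    rw [hγ_def, wouVar, hv_def, hr2]; field_simp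
  have hγ : 0 < γ := by
    rw [hγ_eq]
    have h1 : r ^ 2 < 1 := by nlinarith
    have h2 : (0:ℝ) < 1 - r ^ 2 := by linarith
    positivity
  have main : (∫⁻ θs in Ioc (-π) π, auxE v γ r μ θ θs) = ENNReal.ofReal (fWN μ v θ) :=
    auxE_lintegral hv hγ hγ_eq μ θ
  -- pointwise identity
  have hpt : ∀ θs : ℝ, fWN μ v θs * pWOU α μ σ t θ θs = (auxE v γ r μ θ θs).toReal := by
    intro θs
    have hfθs : (fWN μ v θs) ≠ 0 := (fWN_pos hv μ θs).ne'
    have hb : fWN μ v θs * pWOU α μ σ t θ θs = ∑' m : ℤ, (∑' k : ℤ, auxA v γ r μ θ m k θs) := by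
      rw [pWOU, ← tsum_mul_left]
      refine tsum_congr fun m => ?_
      rw [wnWeight, ← hv_def, ← hγ_def]
      rw [show fWN μ v θs * (gaussDens v (θs - μ + 2 * (m:ℝ) * π) / fWN μ v θs *
          fWN (wouMean α μ t m θs) γ θ)
        = gaussDens v (θs - μ + 2 * (m:ℝ) * π) * fWN (wouMean α μ t m θs) γ θ by
          field_simp]
      rw [fWN, ← tsum_mul_left]
      refine tsum_congr fun k => ?_
      rw [auxA, wouMean, ← hr_def]
      congr 2
      ring
    rw [hb, auxE]
    have h1 : ∀ m : ℤ, ENNReal.ofReal (∑' k : ℤ, auxA v γ r μ θ m k θs) =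
        ∑' k : ℤ, ENNReal.ofReal (auxA v γ r μ θ m k θs) := by
      intro m
      refine ENNReal.ofReal_tsum_of_nonneg (fun k => auxA_nonneg hv hγ r μ θ m k θs) ?_
      unfold auxA
      apply Summable.mul_left
      refine (summable_gaussDens hγ (θ - μ - r * (θs - μ + 2 * (m:ℝ) * π))).congr fun k => ?_
      congr 1
      ring
    simp_rw [← h1]
    rw [ENNReal.tsum_toReal_eq fun m => ENNReal.ofReal_ne_top]
    exact tsum_congr fun m =>
      (ENNReal.toReal_ofReal (tsum_nonneg fun k => auxA_nonneg hv hγ r μ θ m k θs)).symm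
  -- assemble
  rw [intervalIntegral.integral_of_le (by linarith : -π ≤ π)]
  calc (∫ θs in Ioc (-π) π, fWN μ v θs * pWOU α μ σ t θ θs)
      = ∫ θs in Ioc (-π) π, (auxE v γ r μ θ θs).toReal :=
        integral_congr_ae (ae_of_all _ fun θs => hpt θs)
    _ = (∫⁻ θs in Ioc (-π) π, auxE v γ r μ θ θs).toReal := by
        refine integral_toReal (measurable_auxE v γ r μ θ).aemeasurable ?_
        exact ae_lt_top (measurable_auxE v γ r μ θ) (by rw [main]; exact ENNReal.ofReal_ne_top)
    _ = fWN μ v θ := by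
        rw [main, ENNReal.toReal_ofReal (fWN_nonneg hv μ θ)]
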